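/- Let r and d be integers with r ≥ 2 and d ≥ 2r−1. Then the genus of the Castelnuovo semigroup S_{r,d} equals π(r,d); that is, the set ℕ ∖ S_{r,d} is finite of cardinality (m choose 2)(r−1) + mε, where m = ⌊(d−1)/(r−1)⌋ and ε = (d−1) − m(r−1). -/

import Mathlib

/-- The Castelnuovo semigroup `S_{r,d}`: the additive submonoid of ℕ generated by
the interval of integers `{d-r+1, …, d}`. -/
def castelnuovoSemigroup (r d : ℕ) : AddSubmonoid ℕ :=
  AddSubmonoid.closure (Set.Icc (d - r + 1) d)

private lemma mem_closure_Icc_nat {a b : ℕ} (hab : a ≤ b) :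
    ∀ k n : ℕ, k * a ≤ n → n ≤ k * b → n ∈ AddSubmonoid.closure (Set.Icc a b) := by
  intro k
  induction k with
  | zero =>
    intro n h1 h2
    have : n = 0 := by omega
    subst this
    exact zero_mem _
  | succ k ih =>
    intro n h1 h2
    have hmul1 : (k + 1) * a = k * a + a := by ring
    have hmul2 : (k + 1) * b = k * b + b := by ring
    rcases le_total b (n - k * a) with h | h
    · have hn : n = b + (n - b) := by omega
      rw [hn]
      exact add_mem (AddSubmonoid.subset_closure ⟨hab, le_refl b⟩)
        (ih (n - b) (by omega) (by omega))
    · have hn : n = (n - k * a) + k * a := by omega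
      rw [hn]
      exact add_mem (AddSubmonoid.subset_closure ⟨by omega, h⟩)
        (ih (k * a) le_rfl (Nat.mul_le_mul_left k hab))

private lemma exists_rep_of_mem_closure {a b n : ℕ}
    (h : n ∈ AddSubmonoid.closure (Set.Icc a b)) :
    ∃ k, k * a ≤ n ∧ n ≤ k * b := by
  induction h using AddSubmonoid.closure_induction with
  | mem x hx => exact ⟨1, by simpa using hx.1, by simpa using hx.2⟩
  | zero => exact ⟨0, by simp, by simp⟩
  | add x y _ _ ihx ihy =>
    obtain ⟨k1, h1, h2⟩ := ihx
    obtain ⟨k2, h3, h4⟩ := ihy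
    exact ⟨k1 + k2, by rw [add_mul]; omega, by rw [add_mul]; omega⟩

theorem castelnuovo_genus (r d : ℕ) (hr : 2 ≤ r) (hd : 2 * r - 1 ≤ d)
    (m ε : ℕ) (hm : m = (d - 1) / (r - 1)) (hε : ε = (d - 1) - m * (r - 1)) :
    ((castelnuovoSemigroup r d : Set ℕ)ᶜ).Finite ∧
    ((castelnuovoSemigroup r d : Set ℕ)ᶜ).ncard =
      Nat.choose m 2 * (r - 1) + m * ε := by
  classical
  set a := d - r + 1 with ha_def
  have ha : 0 < a := by omega
  have had : a ≤ d := by omega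
  have hr1 : 0 < r - 1 := by omega
  have hdm1 := Nat.div_add_mod (d - 1) (r - 1)
  have hcm1 : (r - 1) * ((d - 1) / (r - 1)) = (d - 1) / (r - 1) * (r - 1) :=
    Nat.mul_comm _ _
  have hmodlt : (d - 1) % (r - 1) < r - 1 := Nat.mod_lt _ hr1
  have hme : m * (r - 1) + ε = d - 1 := by subst hm hε; omega
  have hεlt : ε < r - 1 := by subst hm hε; omega
  have hm1 : 2 ≤ m := by
    subst hm
    exact (Nat.le_div_iff_mul_le hr1).mpr (by omega)
  have hS : castelnuovoSemigroup r d = AddSubmonoid.closure (Set.Icc a d) := by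
    rw [ha_def]; rfl
  have key : ∀ n : ℕ, n ∈ castelnuovoSemigroup r d ↔ n ≤ n / a * d := by
    intro n
    rw [hS]
    constructor
    · intro h
      obtain ⟨k, h1, h2⟩ := exists_rep_of_mem_closure h
      have hk : k ≤ n / a := (Nat.le_div_iff_mul_le ha).mpr h1
      exact h2.trans (Nat.mul_le_mul_right d hk)
    · intro h
      exact mem_closure_Icc_nat had (n / a) n (Nat.div_mul_le_self n a) h
  set F : Finset ℕ :=
    (Finset.range (m * a)).filter (fun n => n / a * (r - 1) < n % a) with hF
  have hcompl : ((castelnuovoSemigroup r d : Set ℕ)ᶜ) = ↑F := by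
    ext n
    have hdm := Nat.div_add_mod n a
    have hcm : a * (n / a) = n / a * a := Nat.mul_comm _ _
    have hmod : n % a < a := Nat.mod_lt _ ha
    have hexp : n / a * d = n / a * a + n / a * (r - 1) := by
      rw [← Nat.mul_add]; congr 1; omega
    simp only [hF, Set.mem_compl_iff, SetLike.mem_coe, key, not_le, Finset.coe_filter,
      Set.mem_setOf_eq, Finset.mem_range, Finset.mem_coe, Finset.mem_filter]
    constructor
    · intro h
      refine ⟨?_, by omega⟩
      by_contra hge
      push_neg at hge
      have h2 : m ≤ n / a := (Nat.le_div_iff_mul_le ha).mpr hge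
      have h3 : m * (r - 1) ≤ n / a * (r - 1) := Nat.mul_le_mul_right _ h2
      omega
    · rintro ⟨_, hP⟩
      omega
  have hblock : ∀ q : ℕ,
      ((Finset.range ((q + 1) * a)).filter (fun n => n / a * (r - 1) < n % a)).card
        = ((Finset.range (q * a)).filter (fun n => n / a * (r - 1) < n % a)).card
          + (a - 1 - q * (r - 1)) := by
    intro q
    have hqa : (q + 1) * a = q * a + a := by ring
    have hsplit : Finset.range ((q + 1) * a)
        = Finset.range (q * a) ∪ Finset.Ico (q * a) ((q + 1) * a) := by
      rw [Finset.range_eq_Ico, Finset.range_eq_Ico,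
        Finset.Ico_union_Ico_eq_Ico (Nat.zero_le _) (by omega)]
    have hdisj : Disjoint (Finset.range (q * a)) (Finset.Ico (q * a) ((q + 1) * a)) := by
      rw [Finset.disjoint_left]
      intro x hx1 hx2
      rw [Finset.mem_range] at hx1
      rw [Finset.mem_Ico] at hx2
      omega
    have hIco : (Finset.Ico (q * a) ((q + 1) * a)).filter
        (fun n => n / a * (r - 1) < n % a)
        = Finset.Ico (q * a + q * (r - 1) + 1) ((q + 1) * a) := by
      ext n
      simp only [Finset.mem_filter, Finset.mem_Ico]
      constructor
      · rintro ⟨⟨h1, h2⟩, hP⟩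
        have hq : n / a = q := Nat.div_eq_of_lt_le h1 h2
        have hdm := Nat.div_add_mod n a
        rw [hq] at hP hdm
        have hcm : a * q = q * a := Nat.mul_comm _ _
        exact ⟨by omega, h2⟩
      · rintro ⟨h1, h2⟩
        have h0 : q * a ≤ n := by omega
        have hq : n / a = q := Nat.div_eq_of_lt_le h0 h2
        have hdm := Nat.div_add_mod n a
        rw [hq] at hdm
        have hcm : a * q = q * a := Nat.mul_comm _ _
        exact ⟨⟨h0, h2⟩, by rw [hq]; omega⟩
    rw [hsplit, Finset.filter_union,
      Finset.card_union_of_disjoint (Finset.disjoint_filter_filter hdisj), hIco,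
      Nat.card_Ico]
    omega
  have hcard : ∀ q : ℕ,
      ((Finset.range (q * a)).filter (fun n => n / a * (r - 1) < n % a)).card
        = ∑ i ∈ Finset.range q, (a - 1 - i * (r - 1)) := by
    intro q
    induction q with
    | zero => simp
    | succ q ih => rw [hblock, ih, Finset.sum_range_succ]
  have hgauss : ∀ k : ℕ, ∑ i ∈ Finset.range k, i = Nat.choose k 2 := by
    intro k
    induction k with
    | zero => simp
    | succ k ih =>
      rw [Finset.sum_range_succ, ih]
      have h2 := Finset.sum_range_id_mul_two k
      have h3 := Nat.choose_two_right k
      have h4 := Nat.choose_two_right (k + 1)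
      have h5 : (k + 1) * (k + 1 - 1) = k * (k - 1) + 2 * k := by
        cases k with
        | zero => simp
        | succ n =>
          simp only [Nat.add_sub_cancel]
          ring
      rw [ih] at h2
      omega
  have hsum : ∑ i ∈ Finset.range m, (a - 1 - i * (r - 1))
      = Nat.choose m 2 * (r - 1) + m * ε := by
    have hterm : ∀ i ∈ Finset.range m,
        a - 1 - i * (r - 1) = (m - 1 - i) * (r - 1) + ε := by
      intro i hi
      rw [Finset.mem_range] at hi
      have h1 : (m - 1 - i) * (r - 1) = (m - 1) * (r - 1) - i * (r - 1) := by
        rw [Nat.sub_mul]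
      have h2 : (m - 1) * (r - 1) = m * (r - 1) - 1 * (r - 1) := by
        rw [← Nat.sub_mul]
      have h4 : i * (r - 1) ≤ (m - 1) * (r - 1) :=
        Nat.mul_le_mul_right _ (by omega)
      omega
    rw [Finset.sum_congr rfl hterm, Finset.sum_add_distrib, Finset.sum_const,
      Finset.card_range, smul_eq_mul, ← Finset.sum_mul]
    have hrefl : ∑ i ∈ Finset.range m, (m - 1 - i) = ∑ i ∈ Finset.range m, i :=
      Finset.sum_range_reflect (fun i => i) m
    rw [hrefl, hgauss]
  refine ⟨?_, ?_⟩
  · rw [hcompl]; exact F.finite_toSet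
  · rw [hcompl, Set.ncard_coe_finset, hF, hcard, hsum]
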